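/- Let g be continuous increasing with g(0)=0, g>0 on (0,∞), and ∫₁^∞ ds/g(s) < ∞. Let u ∈ C² on [r₀, R') with u'(r₀) > 0 and u'' ≥ (1/N) g(u') there. Then R' ≤ r₀ + N·∫_{u'(r₀)}^∞ ds/g(s) < ∞. -/

import Mathlib

open MeasureTheory Filter

/-- If `∫₁^∞ ds/g(s) < ∞` and `u'' ≥ (1/N) g(u')` on `[r₀, R')` with
`u'(r₀) > 0`, then `R' ≤ r₀ + N ∫_{u'(r₀)}^∞ ds/g(s)`. -/
theorem stmt_9 (g : ℝ → ℝ)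
    (hgc : ContinuousOn g (Set.Ici 0))
    (hgmono : StrictMonoOn g (Set.Ici 0))
    (hg0 : g 0 = 0)
    (hgpos : ∀ s, 0 < s → 0 < g s)
    (hint : IntegrableOn (fun s => 1 / g s) (Set.Ici 1))
    (N r₀ R' : ℝ) (hN : 1 ≤ N) (hr : r₀ < R')
    (u u' u'' : ℝ → ℝ)
    (hu' : ∀ r ∈ Set.Ico r₀ R', HasDerivAt u (u' r) r)
    (hu'' : ∀ r ∈ Set.Ico r₀ R', HasDerivAt u' (u'' r) r)
    (h0 : 0 < u' r₀)
    (hineq : ∀ r ∈ Set.Ico r₀ R', (1 / N) * g (u' r) ≤ u'' r) :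
    R' ≤ r₀ + N * ∫ s in Set.Ioi (u' r₀), 1 / g s := by
  set a := u' r₀ with ha_def
  have hN0 : (0:ℝ) < N := lt_of_lt_of_le one_pos hN
  -- continuity of u' at points of Ico
  have hu'cont : ∀ t ∈ Set.Ico r₀ R', ContinuousAt u' t := fun t ht => (hu'' t ht).continuousAt
  -- 1/g is continuous on Ioi 0
  have hinvcont : ContinuousOn (fun s => 1 / g s) (Set.Ioi 0) := by
    apply ContinuousOn.div continuousOn_const (hgc.mono Set.Ioi_subset_Ici_self)
    exact fun s hs => (hgpos s hs).ne'
  -- Step 1: u' t ≥ a on Ico r₀ R'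
  have key : ∀ r ∈ Set.Ico r₀ R', ∀ t ∈ Set.Icc r₀ r, a ≤ u' t := by
    rintro r ⟨hr0, hrR⟩ t ht
    have hIccsub : Set.Icc r₀ r ⊆ Set.Ico r₀ R' := fun x hx => ⟨hx.1, lt_of_le_of_lt hx.2 hrR⟩
    have hu'contOn : ContinuousOn u' (Set.Icc r₀ r) :=
      fun x hx => (hu'cont x (hIccsub hx)).continuousWithinAt
    by_contra hcon
    push_neg at hcon
    -- pick c with 0 < c < a and some point with u' ≤ c... take c between max(0, u' t) and a
    set c := max (u' t) 0 ⊔ 0 with hc_def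
    have hut : u' t < a := hcon
    set c' := (max (u' t) 0 + a) / 2 with hc'
    have hc'pos : 0 < c' := by positivity
    have hc'lt : c' < a := by
      have : max (u' t) 0 < a := max_lt hut h0
      simp only [hc']
      linarith
    have hutc' : u' t < c' := by
      have : u' t ≤ max (u' t) 0 := le_max_left _ _
      simp only [hc']
      linarith
    -- the set A
    set A : Set ℝ := Set.Icc r₀ r ∩ u' ⁻¹' (Set.Iic c') with hA_def
    have hAclosed : IsClosed A :=
      hu'contOn.preimage_isClosed_of_isClosed isClosed_Icc isClosed_Iic
    have hAne : A.Nonempty := ⟨t, ht, le_of_lt hutc'⟩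
    have hAbdd : BddBelow A := ⟨r₀, fun x hx => hx.1.1⟩
    set t₁ := sInf A with ht₁_def
    have ht₁A : t₁ ∈ A := hAclosed.csInf_mem hAne hAbdd
    have ht₁0 : r₀ < t₁ := by
      rcases lt_or_eq_of_le ht₁A.1.1 with h | h
      · exact h
      · exfalso
        have := ht₁A.2
        rw [← h] at this
        simp only [Set.mem_preimage, Set.mem_Iic] at this
        exact absurd this (not_le.mpr hc'lt)
    -- on Ioo r₀ t₁, u' > c'
    have hgt : ∀ x ∈ Set.Ico r₀ t₁, c' < u' x := by
      intro x hx
      by_contra hle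
      push_neg at hle
      have hxA : x ∈ A := ⟨⟨hx.1, le_trans (le_of_lt hx.2) ht₁A.1.2⟩, hle⟩
      exact absurd (csInf_le hAbdd hxA) (not_le.mpr hx.2)
    -- u' monotone on Icc r₀ t₁
    have hsub : Set.Icc r₀ t₁ ⊆ Set.Ico r₀ R' := fun x hx =>
      ⟨hx.1, lt_of_le_of_lt (le_trans hx.2 ht₁A.1.2) hrR⟩
    have hmono : MonotoneOn u' (Set.Icc r₀ t₁) := by
      apply monotoneOn_of_deriv_nonneg (convex_Icc _ _)
      · exact fun x hx => (hu'cont x (hsub hx)).continuousWithinAt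
      · intro x hx
        rw [interior_Icc] at hx
        exact ((hu'' x (hsub ⟨le_of_lt hx.1, le_of_lt hx.2⟩)).differentiableAt).differentiableWithinAt
      · intro x hx
        rw [interior_Icc] at hx
        have hmem : x ∈ Set.Ico r₀ R' := hsub ⟨le_of_lt hx.1, le_of_lt hx.2⟩
        rw [(hu'' x hmem).deriv]
        have hpos : 0 < u' x := lt_trans hc'pos (hgt x ⟨le_of_lt hx.1, hx.2⟩)
        have := hineq x hmem
        have hgp : 0 < g (u' x) := hgpos _ hpos
        nlinarith [one_div_pos.mpr hN0]
    have : a ≤ u' t₁ := by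
      have := hmono ⟨le_refl r₀, le_of_lt ht₁0⟩ ⟨le_of_lt ht₁0, le_refl t₁⟩ (le_of_lt ht₁0)
      simpa [ha_def] using this
    have : u' t₁ ≤ c' := ht₁A.2
    linarith
  -- integrability of 1/g on Ici a
  have hIa : IntegrableOn (fun s => 1 / g s) (Set.Ici a) := by
    have h1 : IntegrableOn (fun s => 1 / g s) (Set.Icc a 1) := by
      apply ContinuousOn.integrableOn_Icc
      exact hinvcont.mono (fun x hx => lt_of_lt_of_le h0 hx.1)
    have h2 : IntegrableOn (fun s => 1 / g s) (Set.Icc a 1 ∪ Set.Ici 1) := h1.union hint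
    apply h2.mono_set
    intro s hs
    rcases le_or_gt s 1 with h | h
    · exact Or.inl ⟨hs, h⟩
    · exact Or.inr (le_of_lt h)
  -- nonneg of the integral
  set I := ∫ s in Set.Ioi a, 1 / g s with hI_def
  have hInn : 0 ≤ I := setIntegral_nonneg measurableSet_Ioi
    (fun s hs => le_of_lt (one_div_pos.mpr (hgpos s (lt_trans h0 hs))))
  -- interval integrability
  have hII : ∀ y, a ≤ y → IntervalIntegrable (fun s => 1 / g s) volume a y := by
    intro y hy
    apply IntegrableOn.intervalIntegrable
    rw [Set.uIcc_of_le hy]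
    exact hIa.mono_set (fun x hx => hx.1)
  -- bound ∫ a..y ≤ I
  have hbound : ∀ y, a ≤ y → (∫ s in a..y, 1 / g s) ≤ I := by
    intro y hy
    rw [intervalIntegral.integral_of_le hy]
    apply setIntegral_mono_set (hIa.mono_set Set.Ioi_subset_Ici_self)
    · filter_upwards [ae_restrict_mem measurableSet_Ioi] with s hs
      exact le_of_lt (one_div_pos.mpr (hgpos s (lt_trans h0 hs)))
    · exact HasSubset.Subset.eventuallyLE Set.Ioc_subset_Ioi_self
  -- derivative of F at y ≥ a
  have hF : ∀ y, a ≤ y → HasDerivAt (fun z => ∫ s in a..z, 1 / g s) (1 / g y) y := by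
    intro y hy
    have hy0 : 0 < y := lt_of_lt_of_le h0 hy
    apply intervalIntegral.integral_hasDerivAt_right (hII y hy)
    · exact hinvcont.stronglyMeasurableAtFilter isOpen_Ioi y hy0
    · exact (hinvcont y hy0).continuousAt (Ioi_mem_nhds hy0)
  -- main estimate: ∀ r ∈ Ico, r - r₀ ≤ N * I
  have main : ∀ r ∈ Set.Ico r₀ R', r ≤ r₀ + N * I := by
    rintro r ⟨hr0, hrR⟩
    set φ : ℝ → ℝ := fun t => N * (∫ s in a..(u' t), 1 / g s) - (t - r₀) with hφ
    have hφderiv : ∀ x ∈ Set.Icc r₀ r, HasDerivAt φ (N * (1 / g (u' x) * u'' x) - 1) x := by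
      intro x hx
      have hmem : x ∈ Set.Ico r₀ R' := ⟨hx.1, lt_of_le_of_lt hx.2 hrR⟩
      have hux : a ≤ u' x := key r ⟨hr0, hrR⟩ x hx
      have h1 := (hF (u' x) hux).comp x (hu'' x hmem)
      have h2 := (h1.const_mul N).sub ((hasDerivAt_id x).sub_const r₀)
      simpa [hφ, mul_comm, Pi.sub_def] using h2
    have hφmono : MonotoneOn φ (Set.Icc r₀ r) := by
      apply monotoneOn_of_deriv_nonneg (convex_Icc _ _)
      · exact fun x hx => (hφderiv x hx).continuousAt.continuousWithinAt
      · intro x hx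
        rw [interior_Icc] at hx
        exact (hφderiv x ⟨le_of_lt hx.1, le_of_lt hx.2⟩).differentiableAt.differentiableWithinAt
      · intro x hx
        rw [interior_Icc] at hx
        have hx' : x ∈ Set.Icc r₀ r := ⟨le_of_lt hx.1, le_of_lt hx.2⟩
        rw [(hφderiv x hx').deriv]
        have hmem : x ∈ Set.Ico r₀ R' := ⟨hx'.1, lt_of_le_of_lt hx'.2 hrR⟩
        have hux : a ≤ u' x := key r ⟨hr0, hrR⟩ x hx'
        have hgp : 0 < g (u' x) := hgpos _ (lt_of_lt_of_le h0 hux)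
        have hi := hineq x hmem
        have h5 : g (u' x) ≤ N * u'' x := by
          have := mul_le_mul_of_nonneg_left hi hN0.le
          calc g (u' x) = N * (1 / N * g (u' x)) := by field_simp
          _ ≤ N * u'' x := this
        rw [sub_nonneg, show N * (1 / g (u' x) * u'' x) = (N * u'' x) / g (u' x) by ring,
          one_le_div hgp]
        exact h5
    have h1 : φ r₀ ≤ φ r := hφmono ⟨le_refl _, hr0⟩ ⟨hr0, le_refl _⟩ hr0
    have h2 : φ r₀ = 0 := by simp [hφ, ha_def]
    have h3 : (∫ s in a..(u' r), 1 / g s) ≤ I := hbound (u' r) (key r ⟨hr0, hrR⟩ r ⟨hr0, le_refl r⟩)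
    have h4 : r - r₀ ≤ N * (∫ s in a..(u' r), 1 / g s) := by
      rw [h2] at h1; simp only [hφ] at h1; linarith
    nlinarith
  -- conclude
  by_contra hcon
  push_neg at hcon
  set r := (r₀ + N * I + R') / 2 with hr_def
  have h1 : r₀ + N * I < r := by simp only [hr_def]; linarith
  have h2 : r < R' := by simp only [hr_def]; linarith
  have h3 : r₀ ≤ r := by nlinarith
  have := main r ⟨h3, h2⟩
  linarith
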